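/- For all 1 ≤ p, q < ∞ the unit spheres S(ℓ_p) and S(ℓ_q) are uniformly homeomorphic: there exists a bijection F : S(ℓ_p) → S(ℓ_q) such that both F and F^{-1} are uniformly continuous. -/

import Mathlib

open scoped ENNReal

noncomputable section

namespace MazurAux

/-- scalar Mazur map -/
def mz (r t : ℝ) : ℝ := Real.sign t * |t| ^ r

lemma mz_of_nonneg {t : ℝ} (ht : 0 ≤ t) (r : ℝ) (hr : r ≠ 0) : mz r t = t ^ r := by
  rcases ht.eq_or_lt with rfl | ht
  · simp [mz, Real.zero_rpow hr]
  · rw [mz, Real.sign_of_pos ht, abs_of_pos ht, one_mul]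

lemma mz_neg (r t : ℝ) : mz r (-t) = - mz r t := by
  rcases lt_trichotomy t 0 with ht | rfl | ht
  · rw [mz, mz, Real.sign_of_neg ht, Real.sign_of_pos (neg_pos.2 ht), abs_neg]; ring
  · simp [mz]
  · rw [mz, mz, Real.sign_of_pos ht, Real.sign_of_neg (neg_neg_iff_pos.mpr ht), abs_neg]; ring

lemma abs_mz (r t : ℝ) (hr : r ≠ 0) : |mz r t| = |t| ^ r := by
  rcases lt_trichotomy t 0 with ht | rfl | ht
  · rw [mz, Real.sign_of_neg ht, neg_one_mul, abs_neg,
      abs_of_nonneg (Real.rpow_nonneg (abs_nonneg t) r)]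
  · simp [mz, Real.zero_rpow hr]
  · rw [mz, Real.sign_of_pos ht, one_mul, abs_of_nonneg (Real.rpow_nonneg (abs_nonneg t) r)]

lemma mz_comp (r s t : ℝ) (hr : 0 < r) : mz s (mz r t) = mz (r * s) t := by
  rcases lt_trichotomy t 0 with ht | rfl | ht
  · have hab : (0:ℝ) < |t| := abs_pos.2 ht.ne
    have h1 : mz r t = -(|t| ^ r) := by rw [mz, Real.sign_of_neg ht]; ring
    have h2 : (0:ℝ) < |t| ^ r := Real.rpow_pos_of_pos hab r
    rw [h1, mz, mz, Real.sign_of_neg (by linarith : -(|t| ^ r) < 0), Real.sign_of_neg ht,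
      abs_neg, abs_of_pos h2, ← Real.rpow_mul (abs_nonneg t)]
  · simp [mz]
  · have hab : (0:ℝ) < |t| := abs_pos.2 ht.ne'
    have h1 : mz r t = |t| ^ r := by rw [mz, Real.sign_of_pos ht, one_mul]
    have h2 : (0:ℝ) < |t| ^ r := Real.rpow_pos_of_pos hab r
    rw [h1, mz, mz, Real.sign_of_pos h2, Real.sign_of_pos ht,
      abs_of_pos h2, ← Real.rpow_mul (abs_nonneg t)]

lemma mz_one (t : ℝ) : mz 1 t = t := by
  rcases lt_trichotomy t 0 with ht | rfl | ht
  · rw [mz, Real.rpow_one, Real.sign_of_neg ht, abs_of_neg ht]; ring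
  · simp [mz]
  · rw [mz, Real.rpow_one, Real.sign_of_pos ht, abs_of_pos ht]; ring

/-- subadditivity of rpow for exponent ≤ 1 -/
lemma rpow_add_le_add_rpow' {a b r : ℝ} (ha : 0 ≤ a) (hb : 0 ≤ b) (h0 : 0 ≤ r) (h1 : r ≤ 1) :
    (a + b) ^ r ≤ a ^ r + b ^ r := by
  have h := NNReal.rpow_add_le_add_rpow a.toNNReal b.toNNReal h0 h1
  have h2 := NNReal.coe_le_coe.2 h
  push_cast at h2
  rwa [Real.coe_toNNReal a ha, Real.coe_toNNReal b hb] at h2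

lemma mzA_le {r a b : ℝ} (hr0 : 0 < r) (hr1 : r ≤ 1) (hb : 0 ≤ b) (hab : b ≤ a) :
    a ^ r - b ^ r ≤ (a - b) ^ r := by
  have := rpow_add_le_add_rpow' (sub_nonneg.2 hab) hb hr0.le hr1
  rw [sub_add_cancel] at this
  linarith

/-- key inequality for the small exponent -/
lemma mzA_pos {r : ℝ} (hr0 : 0 < r) (hr1 : r ≤ 1) (a b : ℝ) (ha : 0 ≤ a) :
    |mz r a - mz r b| ≤ 2 * |a - b| ^ r := by
  have h2 : (0:ℝ) ≤ |a - b| ^ r := Real.rpow_nonneg (abs_nonneg _) r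
  rcases le_total 0 b with hb | hb
  · rw [mz_of_nonneg ha r hr0.ne', mz_of_nonneg hb r hr0.ne']
    rcases le_total b a with hba | hba
    · rw [abs_of_nonneg (sub_nonneg.2 (Real.rpow_le_rpow hb hba hr0.le)),
        abs_of_nonneg (sub_nonneg.2 hba)]
      calc a ^ r - b ^ r ≤ (a - b) ^ r := mzA_le hr0 hr1 hb hba
        _ ≤ 2 * (a - b) ^ r := by nlinarith [Real.rpow_nonneg (sub_nonneg.2 hba) r]
    · rw [abs_sub_comm, abs_of_nonneg (sub_nonneg.2 (Real.rpow_le_rpow ha hba hr0.le)),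
        abs_sub_comm a b, abs_of_nonneg (sub_nonneg.2 hba)]
      calc b ^ r - a ^ r ≤ (b - a) ^ r := mzA_le hr0 hr1 ha hba
        _ ≤ 2 * (b - a) ^ r := by nlinarith [Real.rpow_nonneg (sub_nonneg.2 hba) r]
  · have hab : |a - b| = a + (-b) := by rw [abs_of_nonneg (by linarith)]; ring
    have h3 : mz r b = -((-b) ^ r) := by
      rw [← neg_neg b, mz_neg, mz_of_nonneg (by linarith) r hr0.ne', neg_neg]
    rw [mz_of_nonneg ha r hr0.ne', h3, sub_neg_eq_add, hab]
    have ha' : a ^ r ≤ (a + -b) ^ r := Real.rpow_le_rpow ha (by linarith) hr0.le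
    have hb' : (-b) ^ r ≤ (a + -b) ^ r := Real.rpow_le_rpow (by linarith) (by linarith) hr0.le
    have h4 : (0:ℝ) ≤ a ^ r := Real.rpow_nonneg ha r
    have h5 : (0:ℝ) ≤ (-b) ^ r := Real.rpow_nonneg (by linarith) r
    rw [abs_of_nonneg (by linarith)]
    linarith

lemma mzA {r : ℝ} (hr0 : 0 < r) (hr1 : r ≤ 1) (a b : ℝ) :
    |mz r a - mz r b| ≤ 2 * |a - b| ^ r := by
  rcases le_total 0 a with ha | ha
  · exact mzA_pos hr0 hr1 a b ha
  · have := mzA_pos hr0 hr1 (-a) (-b) (by linarith)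
    rw [mz_neg, mz_neg, neg_sub_neg, neg_sub_neg, abs_sub_comm (mz r b), abs_sub_comm b a] at this
    exact this

lemma self_mul_rpow_sub_one {x s : ℝ} (hx : 0 ≤ x) (hs : 1 ≤ s) : x * x ^ (s - 1) = x ^ s := by
  rcases hx.eq_or_lt with rfl | hx
  · rcases eq_or_lt_of_le hs with rfl | hs1
    · norm_num
    · rw [Real.zero_rpow (by intro h; rw [sub_eq_zero] at h; exact hs1.ne h.symm),
        Real.zero_rpow (by positivity : s ≠ 0), mul_zero]
  · calc x * x ^ (s - 1) = x ^ (1:ℝ) * x ^ (s - 1) := by rw [Real.rpow_one]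
      _ = x ^ (1 + (s - 1)) := (Real.rpow_add hx _ _).symm
      _ = x ^ s := by ring_nf

lemma mzB_aux {s u : ℝ} (hs : 1 ≤ s) (hu0 : 0 ≤ u) : 1 - u ^ s ≤ s * (1 - u) := by
  have h := one_add_mul_self_le_rpow_one_add (show (-1:ℝ) ≤ u - 1 by linarith) hs
  rw [show (1:ℝ) + (u - 1) = u by ring] at h
  linarith

lemma mzB_le {s a b : ℝ} (hs : 1 ≤ s) (hb : 0 ≤ b) (hba : b ≤ a) :
    a ^ s - b ^ s ≤ s * (a - b) * a ^ (s - 1) := by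
  rcases (hb.trans hba).eq_or_lt with h0 | ha
  · have hb0 : b = 0 := le_antisymm (h0 ▸ hba) hb
    subst hb0; rw [← h0]; simp
  · set u := b / a with hu
    have hb_eq : b = u * a := by rw [hu, div_mul_cancel₀ _ ha.ne']
    have hu0 : 0 ≤ u := div_nonneg hb ha.le
    have hbs : b ^ s = u ^ s * a ^ s := by rw [hb_eq, Real.mul_rpow hu0 ha.le]
    have h5 : a ^ (s - 1) * a = a ^ s := by
      have := self_mul_rpow_sub_one ha.le hs; linarith [this]
    have key := mzB_aux hs hu0
    have has : 0 < a ^ s := Real.rpow_pos_of_pos ha s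
    have e1 : a ^ s - b ^ s = (1 - u ^ s) * a ^ s := by rw [hbs]; ring
    have e2 : s * (a - b) * a ^ (s - 1) = (s * (1 - u)) * (a ^ (s - 1) * a) := by
      rw [hb_eq]; ring
    rw [e1, e2, h5]
    exact mul_le_mul_of_nonneg_right key has.le

lemma mzB_pos {s : ℝ} (hs : 1 ≤ s) (a b : ℝ) (ha : 0 ≤ a) :
    |mz s a - mz s b| ≤ s * |a - b| * (|a| ^ (s - 1) + |b| ^ (s - 1)) := by
  have hs0 : s ≠ 0 := by positivity
  rcases le_total 0 b with hb | hb
  · rw [mz_of_nonneg ha s hs0, mz_of_nonneg hb s hs0, abs_of_nonneg ha, abs_of_nonneg hb]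
    have hA : (0:ℝ) ≤ a ^ (s - 1) := Real.rpow_nonneg ha _
    have hB : (0:ℝ) ≤ b ^ (s - 1) := Real.rpow_nonneg hb _
    rcases le_total b a with hba | hba
    · rw [abs_of_nonneg (sub_nonneg.2 (Real.rpow_le_rpow hb hba (by linarith))),
        abs_of_nonneg (sub_nonneg.2 hba)]
      have := mzB_le hs hb hba
      nlinarith [mul_nonneg (sub_nonneg.2 hba) hB, this]
    · rw [abs_sub_comm, abs_of_nonneg (sub_nonneg.2 (Real.rpow_le_rpow ha hba (by linarith))),
        abs_sub_comm a b, abs_of_nonneg (sub_nonneg.2 hba)]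
      have := mzB_le hs ha hba
      nlinarith [mul_nonneg (sub_nonneg.2 hba) hA, this]
  · have hnb : 0 ≤ -b := by linarith
    have h3 : mz s b = -((-b) ^ s) := by
      rw [← neg_neg b, mz_neg, mz_of_nonneg hnb s hs0, neg_neg]
    rw [mz_of_nonneg ha s hs0, h3, sub_neg_eq_add]
    have hA : (0:ℝ) ≤ a ^ (s - 1) := Real.rpow_nonneg ha _
    have hB : (0:ℝ) ≤ (-b) ^ (s - 1) := Real.rpow_nonneg hnb _
    have eA : a * a ^ (s - 1) = a ^ s := self_mul_rpow_sub_one ha hs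
    have eB : (-b) * (-b) ^ (s - 1) = (-b) ^ s := self_mul_rpow_sub_one hnb hs
    have hsa : (0:ℝ) ≤ a ^ s := Real.rpow_nonneg ha _
    have hsb : (0:ℝ) ≤ (-b) ^ s := Real.rpow_nonneg hnb _
    rw [abs_of_nonneg (by linarith : (0:ℝ) ≤ a ^ s + (-b) ^ s),
      abs_of_nonneg ha, abs_of_nonpos hb, abs_of_nonneg (by linarith : (0:ℝ) ≤ a - b)]
    nlinarith [mul_nonneg ha hB, mul_nonneg hnb hA,
      mul_nonneg (mul_nonneg (by linarith : (0:ℝ) ≤ s - 1) (by linarith : (0:ℝ) ≤ a + -b))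
        (by linarith : (0:ℝ) ≤ a ^ (s-1) + (-b) ^ (s-1))]

lemma mzB {s : ℝ} (hs : 1 ≤ s) (a b : ℝ) :
    |mz s a - mz s b| ≤ s * |a - b| * (|a| ^ (s - 1) + |b| ^ (s - 1)) := by
  rcases le_total 0 a with ha | ha
  · exact mzB_pos hs a b ha
  · have := mzB_pos hs (-a) (-b) (by linarith)
    rw [mz_neg, mz_neg, neg_sub_neg, neg_sub_neg, abs_sub_comm (mz s b), abs_sub_comm b a,
      abs_neg, abs_neg] at this
    exact this

lemma add_rpow_le_two_rpow {A B k : ℝ} (hA : 0 ≤ A) (hB : 0 ≤ B) (hk : 0 ≤ k) :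
    (A + B) ^ k ≤ 2 ^ k * (A ^ k + B ^ k) := by
  have h2 : (0:ℝ) ≤ 2 ^ k := Real.rpow_nonneg (by norm_num) k
  rcases le_total A B with h | h
  · calc (A + B) ^ k ≤ (2 * B) ^ k := Real.rpow_le_rpow (by linarith) (by linarith) hk
      _ = 2 ^ k * B ^ k := Real.mul_rpow (by norm_num) hB
      _ ≤ 2 ^ k * (A ^ k + B ^ k) := by nlinarith [Real.rpow_nonneg hA k]
  · calc (A + B) ^ k ≤ (2 * A) ^ k := Real.rpow_le_rpow (by linarith) (by linarith) hk
      _ = 2 ^ k * A ^ k := Real.mul_rpow (by norm_num) hA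
      _ ≤ 2 ^ k * (A ^ k + B ^ k) := by nlinarith [Real.rpow_nonneg hB k]

/-! ## lp-level -/

section LpLevel

variable {p q : ℝ≥0∞} [Fact (1 ≤ p)] [Fact (1 ≤ q)]

lemma memℓp_mz (hpr : 1 ≤ p.toReal) (hqr : 1 ≤ q.toReal) (x : lp (fun _ : ℕ => ℝ) p) :
    Memℓp (fun i => mz (p.toReal / q.toReal) (x i)) q := by
  have hp0 : 0 < p.toReal := by linarith
  have hq0 : 0 < q.toReal := by linarith
  have hr0 : p.toReal / q.toReal ≠ 0 := by positivity
  apply memℓp_gen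
  have hsum := (lp.memℓp x).summable hp0
  apply hsum.congr
  intro i
  rw [Real.norm_eq_abs, Real.norm_eq_abs, abs_mz _ _ hr0, ← Real.rpow_mul (abs_nonneg _),
    div_mul_cancel₀ _ hq0.ne']

/-- Mazur map at the `lp` level. -/
def mzLp (hpr : 1 ≤ p.toReal) (hqr : 1 ≤ q.toReal) (x : lp (fun _ : ℕ => ℝ) p) :
    lp (fun _ : ℕ => ℝ) q :=
  ⟨fun i => mz (p.toReal / q.toReal) (x i), memℓp_mz hpr hqr x⟩

lemma mzLp_apply (hpr : 1 ≤ p.toReal) (hqr : 1 ≤ q.toReal) (x : lp (fun _ : ℕ => ℝ) p) (i : ℕ) :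
    (mzLp hpr hqr x) i = mz (p.toReal / q.toReal) (x i) := rfl

lemma norm_mzLp_rpow (hpr : 1 ≤ p.toReal) (hqr : 1 ≤ q.toReal) (x : lp (fun _ : ℕ => ℝ) p) :
    ‖mzLp hpr hqr x‖ ^ q.toReal = ‖x‖ ^ p.toReal := by
  have hp0 : 0 < p.toReal := by linarith
  have hq0 : 0 < q.toReal := by linarith
  have hr0 : p.toReal / q.toReal ≠ 0 := by positivity
  rw [lp.norm_rpow_eq_tsum hq0, lp.norm_rpow_eq_tsum hp0]
  apply tsum_congr
  intro i
  rw [mzLp_apply, Real.norm_eq_abs, Real.norm_eq_abs, abs_mz _ _ hr0,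
    ← Real.rpow_mul (abs_nonneg _), div_mul_cancel₀ _ hq0.ne']

lemma norm_mzLp_one (hpr : 1 ≤ p.toReal) (hqr : 1 ≤ q.toReal) (x : lp (fun _ : ℕ => ℝ) p)
    (hx : ‖x‖ = 1) : ‖mzLp hpr hqr x‖ = 1 := by
  have hq0 : 0 < q.toReal := by linarith
  have h := norm_mzLp_rpow hpr hqr x
  rw [hx, Real.one_rpow] at h
  have h0 : (0:ℝ) ≤ ‖mzLp hpr hqr x‖ := norm_nonneg _
  calc ‖mzLp hpr hqr x‖ = (‖mzLp hpr hqr x‖ ^ q.toReal) ^ q.toReal⁻¹ :=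
        (Real.rpow_rpow_inv h0 hq0.ne').symm
    _ = 1 := by rw [h, Real.one_rpow]

lemma mzLp_comp (hpr : 1 ≤ p.toReal) (hqr : 1 ≤ q.toReal) (x : lp (fun _ : ℕ => ℝ) p) :
    mzLp hqr hpr (mzLp hpr hqr x) = x := by
  have hp0 : 0 < p.toReal := by linarith
  have hq0 : 0 < q.toReal := by linarith
  apply lp.ext
  funext i
  show mz (q.toReal / p.toReal) (mz (p.toReal / q.toReal) (x i)) = x i
  rw [mz_comp _ _ _ (by positivity), div_mul_div_comm, mul_comm,
    div_self (by positivity : q.toReal * p.toReal ≠ 0), mz_one]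


lemma normA (hpr : 1 ≤ p.toReal) (hqr : 1 ≤ q.toReal) (hpq : p.toReal ≤ q.toReal)
    (x y : lp (fun _ : ℕ => ℝ) p) :
    ‖mzLp hpr hqr x - mzLp hpr hqr y‖ ≤ 2 * ‖x - y‖ ^ (p.toReal / q.toReal) := by
  have hp0 : 0 < p.toReal := by linarith
  have hq0 : 0 < q.toReal := by linarith
  set r := p.toReal / q.toReal with hr
  have hr0 : 0 < r := by positivity
  have hr1 : r ≤ 1 := by rw [hr, div_le_one hq0]; exact hpq
  have hRnn : (0:ℝ) ≤ 2 * ‖x - y‖ ^ r := by positivity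
  rw [← Real.rpow_le_rpow_iff (norm_nonneg _) hRnn hq0]
  rw [lp.norm_rpow_eq_tsum hq0]
  have key : ∀ i, ‖(mzLp hpr hqr x - mzLp hpr hqr y) i‖ ^ q.toReal
      ≤ 2 ^ q.toReal * ‖(x - y) i‖ ^ p.toReal := by
    intro i
    have e1 : (mzLp hpr hqr x - mzLp hpr hqr y) i = mz r (x i) - mz r (y i) := rfl
    have e2 : (x - y) i = x i - y i := rfl
    rw [e1, e2, Real.norm_eq_abs, Real.norm_eq_abs]
    have h := mzA hr0 hr1 (x i) (y i)
    have h2 := Real.rpow_le_rpow (abs_nonneg _) h hq0.le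
    calc |mz r (x i) - mz r (y i)| ^ q.toReal ≤ (2 * |x i - y i| ^ r) ^ q.toReal := h2
      _ = 2 ^ q.toReal * (|x i - y i| ^ r) ^ q.toReal :=
          Real.mul_rpow (by norm_num) (Real.rpow_nonneg (abs_nonneg _) r)
      _ = 2 ^ q.toReal * |x i - y i| ^ p.toReal := by
          rw [← Real.rpow_mul (abs_nonneg _), hr, div_mul_cancel₀ _ hq0.ne']
  have hsum1 : Summable (fun i => ‖(mzLp hpr hqr x - mzLp hpr hqr y) i‖ ^ q.toReal) :=
    (lp.memℓp _).summable hq0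
  have hsum2 : Summable (fun i => 2 ^ q.toReal * ‖(x - y) i‖ ^ p.toReal) :=
    ((lp.memℓp (x - y)).summable hp0).mul_left _
  calc (∑' i, ‖(mzLp hpr hqr x - mzLp hpr hqr y) i‖ ^ q.toReal)
      ≤ ∑' i, 2 ^ q.toReal * ‖(x - y) i‖ ^ p.toReal := Summable.tsum_le_tsum key hsum1 hsum2
    _ = 2 ^ q.toReal * ∑' i, ‖(x - y) i‖ ^ p.toReal := tsum_mul_left
    _ = 2 ^ q.toReal * ‖x - y‖ ^ p.toReal := by rw [← lp.norm_rpow_eq_tsum hp0]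
    _ = (2 * ‖x - y‖ ^ r) ^ q.toReal := by
        rw [Real.mul_rpow (by norm_num) (Real.rpow_nonneg (norm_nonneg _) r),
          ← Real.rpow_mul (norm_nonneg _), hr, div_mul_cancel₀ _ hq0.ne']

lemma normB (hpr : 1 ≤ p.toReal) (hqr : 1 ≤ q.toReal) (hlt : p.toReal < q.toReal) :
    ∃ C : ℝ, 0 < C ∧ ∀ x y : lp (fun _ : ℕ => ℝ) q, ‖x‖ = 1 → ‖y‖ = 1 →
      ‖mzLp hqr hpr x - mzLp hqr hpr y‖ ≤ C * ‖x - y‖ := by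
  have hp0 : 0 < p.toReal := by linarith
  have hq0 : 0 < q.toReal := by linarith
  set pr := p.toReal with hpr_def
  set qr := q.toReal with hqr_def
  set s := qr / pr with hs_def
  have hs : 1 < s := (one_lt_div hp0).2 hlt
  set v := s / (s - 1) with hv_def
  have hs1 : 0 < s - 1 := by linarith
  have hv0 : 0 < v := by positivity
  have hsv : Real.HolderConjugate s v := (Real.holderConjugate_iff_eq_conjExponent hs).2 hv_def
  set k := pr * v with hk_def
  have hk0 : 0 < k := by positivity
  set C1 : ℝ := (2 ^ (k + 1)) ^ v⁻¹ with hC1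
  have hC1p : 0 < C1 := Real.rpow_pos_of_pos (Real.rpow_pos_of_pos two_pos _) _
  refine ⟨s * C1 ^ pr⁻¹, by positivity, ?_⟩
  intro x y hx hy
  set f : ℕ → ℝ := fun i => |x i - y i| ^ pr with hf_def
  set g : ℕ → ℝ := fun i => (|x i| ^ (s - 1) + |y i| ^ (s - 1)) ^ pr with hg_def
  have hf0 : ∀ i, 0 ≤ f i := fun i => Real.rpow_nonneg (abs_nonneg _) _
  have hg0 : ∀ i, 0 ≤ g i := fun i =>
    Real.rpow_nonneg (add_nonneg (Real.rpow_nonneg (abs_nonneg _) _)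
      (Real.rpow_nonneg (abs_nonneg _) _)) _
  have hprs : pr * s = qr := by rw [hs_def, mul_comm, div_mul_cancel₀ _ hp0.ne']
  have hfs : ∀ i, f i ^ s = ‖(x - y) i‖ ^ qr := by
    intro i
    show (|x i - y i| ^ pr) ^ s = ‖(x - y) i‖ ^ qr
    rw [← Real.rpow_mul (abs_nonneg _), hprs]
    have : (x - y) i = x i - y i := rfl
    rw [this, Real.norm_eq_abs]
  have hf_sum : Summable fun i => f i ^ s := by
    apply Summable.congr ((lp.memℓp (x - y)).summable hq0)
    intro i; exact (hfs i).symm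
  have hfs_tsum : (∑' i, f i ^ s) = ‖x - y‖ ^ qr := by
    rw [lp.norm_rpow_eq_tsum hq0]; exact tsum_congr hfs
  have hsk : (s - 1) * k = qr := by
    have e : (s - 1) * (pr * (s / (s - 1))) = pr * s := by field_simp
    rw [hk_def, hv_def, e, hprs]
  have habs_k : ∀ t : ℝ, (|t| ^ (s - 1)) ^ k = |t| ^ qr := by
    intro t; rw [← Real.rpow_mul (abs_nonneg _), hsk]
  have hgv : ∀ i, g i ^ v = (|x i| ^ (s - 1) + |y i| ^ (s - 1)) ^ k := by
    intro i
    show ((|x i| ^ (s - 1) + |y i| ^ (s - 1)) ^ pr) ^ v = _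
    rw [← Real.rpow_mul (add_nonneg (Real.rpow_nonneg (abs_nonneg _) _)
      (Real.rpow_nonneg (abs_nonneg _) _)), hk_def]
  have hgb : ∀ i, g i ^ v ≤ 2 ^ k * (‖x i‖ ^ qr + ‖y i‖ ^ qr) := by
    intro i
    rw [hgv i, Real.norm_eq_abs, Real.norm_eq_abs]
    calc (|x i| ^ (s-1) + |y i| ^ (s-1)) ^ k
        ≤ 2 ^ k * ((|x i| ^ (s-1)) ^ k + (|y i| ^ (s-1)) ^ k) :=
          add_rpow_le_two_rpow (Real.rpow_nonneg (abs_nonneg _) _)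
            (Real.rpow_nonneg (abs_nonneg _) _) hk0.le
      _ = 2 ^ k * (|x i| ^ qr + |y i| ^ qr) := by rw [habs_k, habs_k]
  have hsumx : Summable fun i => ‖x i‖ ^ qr := (lp.memℓp x).summable hq0
  have hsumy : Summable fun i => ‖y i‖ ^ qr := (lp.memℓp y).summable hq0
  have hg_sum : Summable fun i => g i ^ v := by
    apply Summable.of_nonneg_of_le (fun i => Real.rpow_nonneg (hg0 i) v) hgb
    exact (hsumx.add hsumy).mul_left _
  have hgv_tsum : (∑' i, g i ^ v) ≤ 2 ^ (k + 1) := by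
    calc (∑' i, g i ^ v) ≤ ∑' i, 2 ^ k * (‖x i‖ ^ qr + ‖y i‖ ^ qr) :=
        Summable.tsum_le_tsum hgb hg_sum ((hsumx.add hsumy).mul_left _)
      _ = 2 ^ k * ((∑' i, ‖x i‖ ^ qr) + ∑' i, ‖y i‖ ^ qr) := by
          rw [tsum_mul_left, Summable.tsum_add hsumx hsumy]
      _ = 2 ^ k * 2 := by
          rw [← lp.norm_rpow_eq_tsum hq0 x, ← lp.norm_rpow_eq_tsum hq0 y, hx, hy,
            Real.one_rpow]; norm_num
      _ = 2 ^ (k + 1) := by rw [Real.rpow_add two_pos, Real.rpow_one]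
  obtain ⟨hsumfg, hH⟩ := Real.summable_and_inner_le_Lp_mul_Lq_tsum_of_nonneg hsv hf0 hg0 hf_sum hg_sum
  have hHb : (∑' i, f i * g i) ≤ ‖x - y‖ ^ pr * C1 := by
    have e1 : (∑' i, f i ^ s) ^ (1 / s) = ‖x - y‖ ^ pr := by
      rw [hfs_tsum, ← Real.rpow_mul (norm_nonneg _)]
      congr 1
      rw [hs_def]
      field_simp
    have e2 : (∑' i, g i ^ v) ^ (1 / v) ≤ C1 := by
      rw [hC1, one_div]
      exact Real.rpow_le_rpow (tsum_nonneg fun i => Real.rpow_nonneg (hg0 i) v) hgv_tsum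
        (by positivity)
    calc (∑' i, f i * g i) ≤ (∑' i, f i ^ s) ^ (1/s) * (∑' i, g i ^ v) ^ (1/v) := hH
      _ ≤ ‖x - y‖ ^ pr * C1 := by
          rw [e1]
          exact mul_le_mul_of_nonneg_left e2 (Real.rpow_nonneg (norm_nonneg _) _)
  have hpw : ∀ i, ‖(mzLp hqr hpr x - mzLp hqr hpr y) i‖ ^ pr ≤ s ^ pr * (f i * g i) := by
    intro i
    have e1 : (mzLp hqr hpr x - mzLp hqr hpr y) i = mz s (x i) - mz s (y i) := rfl
    rw [e1, Real.norm_eq_abs]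
    have h := mzB hs.le (x i) (y i)
    have h2 := Real.rpow_le_rpow (abs_nonneg _) h hp0.le
    calc |mz s (x i) - mz s (y i)| ^ pr
        ≤ (s * |x i - y i| * (|x i| ^ (s-1) + |y i| ^ (s-1))) ^ pr := h2
      _ = s ^ pr * (f i * g i) := by
          rw [Real.mul_rpow (by positivity) (add_nonneg (Real.rpow_nonneg (abs_nonneg _) _)
              (Real.rpow_nonneg (abs_nonneg _) _)),
            Real.mul_rpow (by positivity : (0:ℝ) ≤ s) (abs_nonneg _)]
          rw [show f i = |x i - y i| ^ pr from rfl,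
            show g i = (|x i| ^ (s-1) + |y i| ^ (s-1)) ^ pr from rfl]
          ring
  have hsums : Summable fun i => ‖(mzLp hqr hpr x - mzLp hqr hpr y) i‖ ^ pr :=
    (lp.memℓp _).summable hp0
  have hfinal : ‖mzLp hqr hpr x - mzLp hqr hpr y‖ ^ pr ≤ s ^ pr * C1 * ‖x - y‖ ^ pr := by
    calc ‖mzLp hqr hpr x - mzLp hqr hpr y‖ ^ pr
        = ∑' i, ‖(mzLp hqr hpr x - mzLp hqr hpr y) i‖ ^ pr := lp.norm_rpow_eq_tsum hp0 _
      _ ≤ ∑' i, s ^ pr * (f i * g i) := Summable.tsum_le_tsum hpw hsums (hsumfg.mul_left _)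
      _ = s ^ pr * ∑' i, f i * g i := tsum_mul_left
      _ ≤ s ^ pr * (‖x - y‖ ^ pr * C1) :=
          mul_le_mul_of_nonneg_left hHb (Real.rpow_nonneg (by positivity) _)
      _ = s ^ pr * C1 * ‖x - y‖ ^ pr := by ring
  have hCpow : (s * C1 ^ pr⁻¹ * ‖x - y‖) ^ pr = s ^ pr * C1 * ‖x - y‖ ^ pr := by
    rw [Real.mul_rpow (by positivity) (norm_nonneg _),
      Real.mul_rpow (by positivity : (0:ℝ) ≤ s) (by positivity),
      Real.rpow_inv_rpow hC1p.le hp0.ne']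
  rw [← Real.rpow_le_rpow_iff (norm_nonneg _) (by positivity) hp0, hCpow]
  exact hfinal


/-- Mazur map between unit spheres. -/
def sphereMz (hpr : 1 ≤ p.toReal) (hqr : 1 ≤ q.toReal)
    (x : Metric.sphere (0 : lp (fun _ : ℕ => ℝ) p) 1) :
    Metric.sphere (0 : lp (fun _ : ℕ => ℝ) q) 1 :=
  ⟨mzLp hpr hqr x.1, by
    rw [mem_sphere_zero_iff_norm]
    exact norm_mzLp_one hpr hqr x.1 (mem_sphere_zero_iff_norm.1 x.2)⟩

lemma sphereMz_comp (hpr : 1 ≤ p.toReal) (hqr : 1 ≤ q.toReal)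
    (x : Metric.sphere (0 : lp (fun _ : ℕ => ℝ) p) 1) :
    sphereMz hqr hpr (sphereMz hpr hqr x) = x :=
  Subtype.ext (mzLp_comp hpr hqr x.1)

lemma uc_easy (hpr : 1 ≤ p.toReal) (hqr : 1 ≤ q.toReal) (hpq : p.toReal ≤ q.toReal) :
    UniformContinuous (sphereMz hpr hqr (p := p) (q := q)) := by
  rw [Metric.uniformContinuous_iff]
  intro ε hε
  set r := p.toReal / q.toReal with hr
  have hp0 : 0 < p.toReal := by linarith
  have hq0 : 0 < q.toReal := by linarith
  have hr0 : 0 < r := by positivity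
  refine ⟨(ε/2) ^ r⁻¹, by positivity, ?_⟩
  intro a b hab
  rw [Subtype.dist_eq, dist_eq_norm] at hab ⊢
  have h1 : ‖(sphereMz hpr hqr a).1 - (sphereMz hpr hqr b).1‖ ≤ 2 * ‖a.1 - b.1‖ ^ r :=
    normA hpr hqr hpq a.1 b.1
  have h2 : ‖a.1 - b.1‖ ^ r < ((ε/2) ^ r⁻¹) ^ r := Real.rpow_lt_rpow (norm_nonneg _) hab hr0
  rw [Real.rpow_inv_rpow (by positivity) hr0.ne'] at h2
  calc ‖((sphereMz hpr hqr a : lp (fun _ : ℕ => ℝ) q) : lp (fun _ : ℕ => ℝ) q)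
        - (sphereMz hpr hqr b : lp (fun _ : ℕ => ℝ) q)‖
      ≤ 2 * ‖a.1 - b.1‖ ^ r := h1
    _ < 2 * (ε/2) := by linarith
    _ = ε := by ring

lemma uc_hard (hpr : 1 ≤ p.toReal) (hqr : 1 ≤ q.toReal) (hlt : p.toReal < q.toReal) :
    UniformContinuous (sphereMz hqr hpr (p := q) (q := p)) := by
  obtain ⟨C, hC, hbound⟩ := normB hpr hqr hlt
  rw [Metric.uniformContinuous_iff]
  intro ε hε
  refine ⟨ε / C, by positivity, ?_⟩
  intro a b hab
  rw [Subtype.dist_eq, dist_eq_norm] at hab ⊢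
  have h1 := hbound a.1 b.1 (mem_sphere_zero_iff_norm.1 a.2) (mem_sphere_zero_iff_norm.1 b.2)
  calc ‖((sphereMz hqr hpr a : lp (fun _ : ℕ => ℝ) p) : lp (fun _ : ℕ => ℝ) p)
        - (sphereMz hqr hpr b : lp (fun _ : ℕ => ℝ) p)‖
      ≤ C * ‖a.1 - b.1‖ := h1
    _ < C * (ε / C) := mul_lt_mul_of_pos_left hab hC
    _ = ε := by field_simp

end LpLevel

end MazurAux

/-- For all `1 ≤ p, q < ∞` the unit spheres of `ℓ_p` and `ℓ_q` are uniformly homeomorphic. -/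
theorem lp_spheres_uniformly_homeomorphic (p q : ℝ≥0∞)
    (hp : 1 ≤ p) (hp' : p ≠ ⊤) (hq : 1 ≤ q) (hq' : q ≠ ⊤)
    [Fact (1 ≤ p)] [Fact (1 ≤ q)] :
    ∃ (F : Metric.sphere (0 : lp (fun _ : ℕ => ℝ) p) 1 →
          Metric.sphere (0 : lp (fun _ : ℕ => ℝ) q) 1)
      (G : Metric.sphere (0 : lp (fun _ : ℕ => ℝ) q) 1 →
          Metric.sphere (0 : lp (fun _ : ℕ => ℝ) p) 1),
      Function.LeftInverse G F ∧ Function.RightInverse G F ∧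
      UniformContinuous F ∧ UniformContinuous G := by
  have hpr : 1 ≤ p.toReal := by
    rw [← ENNReal.toReal_one]; exact ENNReal.toReal_mono hp' hp
  have hqr : 1 ≤ q.toReal := by
    rw [← ENNReal.toReal_one]; exact ENNReal.toReal_mono hq' hq
  rcases lt_trichotomy p.toReal q.toReal with h | h | h
  · exact ⟨MazurAux.sphereMz hpr hqr, MazurAux.sphereMz hqr hpr,
      fun x => MazurAux.sphereMz_comp hpr hqr x,
      fun x => MazurAux.sphereMz_comp hqr hpr x,
      MazurAux.uc_easy hpr hqr h.le, MazurAux.uc_hard hpr hqr h⟩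
  · have hpq : p = q := (ENNReal.toReal_eq_toReal_iff' hp' hq').1 h
    subst hpq
    exact ⟨id, id, fun x => rfl, fun x => rfl, uniformContinuous_id, uniformContinuous_id⟩
  · exact ⟨MazurAux.sphereMz hpr hqr, MazurAux.sphereMz hqr hpr,
      fun x => MazurAux.sphereMz_comp hpr hqr x,
      fun x => MazurAux.sphereMz_comp hqr hpr x,
      MazurAux.uc_hard hqr hpr h, MazurAux.uc_easy hqr hpr h.le⟩
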